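/- arXiv:2312.17640 — 4 statements merged into one kernel-verified Lean document; each statement's English description precedes it below -/
import Mathlib

section
/- Let A be a real m×n matrix with rows a_1,…,a_m, let b ∈ ℝ^m, and assume the polyhedron V = {v ∈ ℝ^n : A v ≥ b} (inequalities entrywise) is nonempty and bounded. Let (x^i, c^i), i = 1,…,N, be data with x^i ∈ ℝ^K and c^i ∈ ℝ^n, and assume that for every i the set V*(c^i) of minimizers of v ↦ c^i · v over V is a singleton {v^i}; let I^i = {j : a_j · v^i = b_j} be the set of constraints active at v^i. Then the following are equivalent: (1) there exists a matrix ω ∈ ℝ^{n×K} with zero pessimistic regret, i.e., for every i and every v ∈ V*(ω x^i) one has c^i · v = z*(c^i); (2) the linear system in variables (ω, ρ^1,…,ρ^N) with ω ∈ ℝ^{n×K} and ρ^i ∈ ℝ^m given by A^T ρ^i = ω x^i for all i, ρ^i_j ≥ 1 for all j ∈ I^i, and ρ^i_j = 0 for all j ∉ I^i, is feasible. -/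
open Matrix Set BigOperators

noncomputable section

def coneSet {n k : ℕ} (g : Fin k → (Fin n → ℝ)) : Set (Fin n → ℝ) :=
  {x | ∃ t : Fin k → ℝ, (∀ j, 0 ≤ t j) ∧ ∑ j, t j • g j = x}

theorem coneSet_isClosed {n : ℕ} : ∀ (k : ℕ) (g : Fin k → (Fin n → ℝ)),
    IsClosed (coneSet g) := by
  intro k
  induction k with
  | zero =>
    intro g
    have : coneSet g = {0} := by
      ext x
      simp [coneSet, eq_comm]
    rw [this]
    exact isClosed_singleton
  | succ k ih =>
    intro g
    by_cases hli : LinearIndependent ℝ g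
    · -- image of nonneg orthant under closed embedding
      set L := LinearMap.lsum ℝ (fun _ : Fin (k+1) => ℝ) ℕ
        (fun i => LinearMap.id.smulRight (g i)) with hL
      have hker : LinearMap.ker L = ⊥ := (Fintype.linearIndependent_iff'.mp hli)
      have hce := LinearMap.isClosedEmbedding_of_injective hker
      have hclosed : IsClosed {t : Fin (k+1) → ℝ | ∀ j, 0 ≤ t j} := by
        have : {t : Fin (k+1) → ℝ | ∀ j, 0 ≤ t j} = ⋂ j, {t | 0 ≤ t j} := by
          ext t; simp
        rw [this]
        exact isClosed_iInter fun j => isClosed_le continuous_const (continuous_apply j)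
      have : coneSet g = L '' {t | ∀ j, 0 ≤ t j} := by
        ext x
        constructor
        · rintro ⟨t, ht, rfl⟩
          exact ⟨t, ht, by simp [hL]⟩
        · rintro ⟨t, ht, rfl⟩
          exact ⟨t, ht, by simp [hL]⟩
      rw [this]
      exact hce.isClosedMap _ hclosed
    · obtain ⟨l, hl0, j₀, hj₀⟩ := Fintype.not_linearIndependent_iff.mp hli
      -- wlog some coordinate positive
      have main : ∀ (l : Fin (k+1) → ℝ), (∑ i, l i • g i = 0) → ∀ j₀, 0 < l j₀ →
          IsClosed (coneSet g) := by
        intro l hl0 j₀ hj₀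
        have hcover : coneSet g =
            ⋃ j ∈ Finset.univ.filter (fun j => 0 < l j),
              coneSet (fun i : Fin k => g (j.succAbove i)) := by
          ext x
          constructor
          · rintro ⟨t, ht, rfl⟩
            -- pick minimizer of t j / l j over positive l j
            have hne : (Finset.univ.filter (fun j => 0 < l j)).Nonempty :=
              ⟨j₀, by simp [hj₀]⟩
            obtain ⟨j₁, hj₁mem, hj₁min⟩ :=
              (Finset.univ.filter (fun j => 0 < l j)).exists_min_image
                (fun j => t j / l j) hne
            have hlj₁ : 0 < l j₁ := by simpa using hj₁mem
            set μ := t j₁ / l j₁ with hμ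
            have hμ0 : 0 ≤ μ := div_nonneg (ht j₁) hlj₁.le
            set t' := fun j => t j - μ * l j with ht'
            have ht'0 : ∀ j, 0 ≤ t' j := by
              intro j
              by_cases h : 0 < l j
              · have := hj₁min j (by simpa using h)
                have : μ ≤ t j / l j := this
                have h2 := (le_div_iff₀ h).mp this
                simp only [ht']; linarith
              · push_neg at h
                have : 0 ≤ -(μ * l j) := by nlinarith
                have := ht j
                simp only [ht']; linarith
            have ht'j₁ : t' j₁ = 0 := by
              simp only [ht', hμ]; field_simp; ring
            have hsum : ∑ j, t' j • g j = ∑ j, t j • g j := by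
              have : ∑ j, t' j • g j = (∑ j, t j • g j) - μ • (∑ j, l j • g j) := by
                rw [Finset.smul_sum, ← Finset.sum_sub_distrib]
                refine Finset.sum_congr rfl fun j _ => ?_
                simp [ht', sub_smul, smul_smul]
              rw [this, hl0, smul_zero, sub_zero]
            refine mem_iUnion₂.mpr ⟨j₁, by simp [hlj₁], ?_⟩
            refine ⟨fun i => t' (j₁.succAbove i), fun i => ht'0 _, ?_⟩
            have := Fin.sum_univ_succAbove (fun j => t' j • g j) j₁
            rw [← hsum, this, ht'j₁, zero_smul, zero_add]
          · intro hx
            rw [mem_iUnion₂] at hx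
            obtain ⟨j, hj, t, ht, rfl⟩ := hx
            refine ⟨(j.insertNth (0:ℝ) t : Fin (k+1) → ℝ), ?_, ?_⟩
            · intro j'
              refine Fin.succAboveCases j ?_ ?_ j'
              · simp
              · intro i; simpa using ht i
            · rw [Fin.sum_univ_succAbove (fun j' => (j.insertNth (0:ℝ) t : Fin (k+1) → ℝ) j' • g j') j]
              simp
        rw [hcover]
        exact isClosed_biUnion_finset fun j _ => ih _
      rcases hj₀.lt_or_gt with h | h
      · exact main (-l) (by simp [hl0]) j₀ (by simpa using h)
      · exact main l hl0 j₀ h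

theorem coneSet_convex {n k : ℕ} (g : Fin k → (Fin n → ℝ)) : Convex ℝ (coneSet g) := by
  rintro x ⟨t, ht, rfl⟩ y ⟨s, hs, rfl⟩ a b ha hb _
  refine ⟨fun j => a * t j + b * s j,
    fun j => add_nonneg (mul_nonneg ha (ht j)) (mul_nonneg hb (hs j)), ?_⟩
  rw [Finset.smul_sum, Finset.smul_sum, ← Finset.sum_add_distrib]
  refine Finset.sum_congr rfl fun j _ => ?_
  simp [add_smul, smul_smul]

theorem farkas {n k : ℕ} (g : Fin k → (Fin n → ℝ)) (c : Fin n → ℝ)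
    (h : ∀ v : Fin n → ℝ, (∀ j, 0 ≤ g j ⬝ᵥ v) → 0 ≤ c ⬝ᵥ v) :
    ∃ ρ : Fin k → ℝ, (∀ j, 0 ≤ ρ j) ∧ ∑ j, ρ j • g j = c := by
  by_contra hc
  have hcmem : c ∉ coneSet g := by
    rintro ⟨t, ht, hs⟩; exact hc ⟨t, ht, hs⟩
  obtain ⟨f, u, hfu, hmem⟩ :=
    geometric_hahn_banach_point_closed (coneSet_convex g) (coneSet_isClosed k g) hcmem
  have h0 : (0 : Fin n → ℝ) ∈ coneSet g :=
    ⟨0, fun j => le_refl _, by simp⟩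
  have hu0 : u < 0 := by simpa using hmem 0 h0
  have hnn : ∀ y ∈ coneSet g, 0 ≤ f y := by
    intro y hy
    by_contra hfy
    push_neg at hfy
    have hr0 : 0 ≤ 2 * u / f y := by
      rw [div_nonneg_iff]; right; constructor <;> nlinarith
    have hry : (2 * u / f y) • y ∈ coneSet g := by
      obtain ⟨t, ht, hteq⟩ := hy
      refine ⟨fun j => (2 * u / f y) * t j, fun j => mul_nonneg hr0 (ht j), ?_⟩
      rw [← hteq, Finset.smul_sum]
      exact Finset.sum_congr rfl fun j _ => by simp [smul_smul]
    have := hmem _ hry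
    rw [f.map_smul] at this
    have h2 : (2 * u / f y) * f y = 2 * u := div_mul_cancel₀ _ hfy.ne
    simp only [smul_eq_mul, h2] at this
    linarith
  set v := fun i => f (Pi.single i 1 : Fin n → ℝ) with hv
  have hrep : ∀ w : Fin n → ℝ, f w = w ⬝ᵥ v := by
    intro w
    have hw : w = ∑ i, w i • (Pi.single i 1 : Fin n → ℝ) := by
      ext j
      simp [Pi.single_apply, Finset.sum_apply]
    calc f w = f (∑ i, w i • (Pi.single i 1 : Fin n → ℝ)) := by rw [← hw]
    _ = ∑ i, w i * f (Pi.single i 1 : Fin n → ℝ) := by rw [map_sum]; simp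
    _ = w ⬝ᵥ v := rfl
  have hrows : ∀ j, 0 ≤ g j ⬝ᵥ v := by
    intro j
    rw [← hrep]
    apply hnn
    refine ⟨(Pi.single j 1 : Fin k → ℝ), fun i => by simp [Pi.single_apply]; split <;> norm_num, ?_⟩
    rw [Finset.sum_eq_single j] <;> simp [Pi.single_apply]
    intro i hi; simp [hi]
  have := h v hrows
  rw [← hrep] at this
  linarith

theorem tucker {n k : ℕ} (w : Fin k → (Fin n → ℝ)) (j : Fin k)
    (h : ¬ ∃ d : Fin n → ℝ, (∀ i, 0 ≤ w i ⬝ᵥ d) ∧ 0 < w j ⬝ᵥ d) :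
    ∃ ρ : Fin k → ℝ, (∀ i, 0 ≤ ρ i) ∧ ∑ i, ρ i • w i = 0 ∧ 1 ≤ ρ j := by
  push_neg at h
  obtain ⟨ρ, hρ, hsum⟩ := farkas w (-(w j)) (fun v hv => by
    have := h v hv
    have h2 : (-(w j)) ⬝ᵥ v = -(w j ⬝ᵥ v) := by simp
    rw [h2]; linarith)
  classical
  refine ⟨fun i => ρ i + (if i = j then 1 else 0), fun i => ?_, ?_, ?_⟩
  · have := hρ i
    simp only []
    split <;> linarith
  · have heq : ∑ i, (ρ i + if i = j then (1:ℝ) else 0) • w i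
        = (∑ i, ρ i • w i) + ∑ i, (if i = j then (1:ℝ) else 0) • w i := by
      rw [← Finset.sum_add_distrib]
      exact Finset.sum_congr rfl fun i _ => by rw [add_smul]
    rw [heq, hsum, Finset.sum_eq_single j]
    · simp
    · intro i _ hi; simp [hi]
    · simp
  · have := hρ j
    simp only [if_pos rfl]
    simp only [eq_self_iff_true, if_true]
    linarith

/-- The polyhedron `V = {v : A v ≥ b}` (inequalities entrywise). -/
def polyV {m n : ℕ} (A : Matrix (Fin m) (Fin n) ℝ) (b : Fin m → ℝ) : Set (Fin n → ℝ) :=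
  {v | b ≤ A.mulVec v}

/-- `z*(c)`: the optimal (infimum) value of `c · v` over `V`. -/
noncomputable def zstar {m n : ℕ} (A : Matrix (Fin m) (Fin n) ℝ) (b : Fin m → ℝ)
    (c : Fin n → ℝ) : ℝ :=
  sInf ((fun v => c ⬝ᵥ v) '' polyV A b)

/-- `V*(c)`: the set of optimal solutions of `min {c · v : v ∈ V}`. -/
def Vstar {m n : ℕ} (A : Matrix (Fin m) (Fin n) ℝ) (b : Fin m → ℝ)
    (c : Fin n → ℝ) : Set (Fin n → ℝ) :=
  {v ∈ polyV A b | c ⬝ᵥ v = zstar A b c}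

theorem mem_polyV_iff {m n : ℕ} {A : Matrix (Fin m) (Fin n) ℝ} {b : Fin m → ℝ}
    {v : Fin n → ℝ} : v ∈ polyV A b ↔ ∀ j, b j ≤ A j ⬝ᵥ v := by
  simp only [polyV, mem_setOf_eq, Pi.le_def]
  rfl

theorem feasDir {m n : ℕ} (A : Matrix (Fin m) (Fin n) ℝ) (b : Fin m → ℝ)
    (v₀ : Fin n → ℝ) (hv : v₀ ∈ polyV A b) (d : Fin n → ℝ)
    (hd : ∀ j, A j ⬝ᵥ v₀ = b j → 0 ≤ A j ⬝ᵥ d) :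
    ∃ t : ℝ, 0 < t ∧ v₀ + t • d ∈ polyV A b := by
  classical
  have hvj : ∀ j, b j ≤ A j ⬝ᵥ v₀ := mem_polyV_iff.mp hv
  set ε : Fin m → ℝ := fun j =>
    if A j ⬝ᵥ d < 0 then (A j ⬝ᵥ v₀ - b j) / (-(A j ⬝ᵥ d)) else 1 with hε_def
  have hε : ∀ j, 0 < ε j := by
    intro j
    simp only [hε_def]
    split
    case isTrue hneg =>
      have hina : A j ⬝ᵥ v₀ ≠ b j := fun hac => absurd (hd j hac) (by linarith)
      have hpos : 0 < A j ⬝ᵥ v₀ - b j := by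
        rcases lt_or_eq_of_le (hvj j) with h | h
        · linarith
        · exact absurd h.symm hina
      exact div_pos hpos (by linarith)
    case isFalse => norm_num
  set s := insert (1:ℝ) (Finset.univ.image ε) with hs_def
  have hsne : s.Nonempty := ⟨1, Finset.mem_insert_self _ _⟩
  set t := s.min' hsne with ht_def
  have ht0 : 0 < t := by
    have hmem : t ∈ insert (1:ℝ) (Finset.univ.image ε) := s.min'_mem hsne
    rcases Finset.mem_insert.mp hmem with h | h
    · rw [h]; norm_num
    · obtain ⟨j, _, hj⟩ := Finset.mem_image.mp h
      rw [← hj]; exact hε j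
  have htle : ∀ j, t ≤ ε j := fun j =>
    Finset.min'_le _ _ (Finset.mem_insert_of_mem (Finset.mem_image_of_mem ε (Finset.mem_univ j)))
  refine ⟨t, ht0, ?_⟩
  rw [mem_polyV_iff]
  intro j
  have hlin : A j ⬝ᵥ (v₀ + t • d) = A j ⬝ᵥ v₀ + t * (A j ⬝ᵥ d) := by
    simp [dotProduct_add, dotProduct_smul, smul_eq_mul]
  rw [hlin]
  by_cases hneg : A j ⬝ᵥ d < 0
  · have h1 : t ≤ (A j ⬝ᵥ v₀ - b j) / (-(A j ⬝ᵥ d)) := by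
      have := htle j; simp only [hε_def, if_pos hneg] at this; exact this
    have h2 : t * (-(A j ⬝ᵥ d)) ≤ A j ⬝ᵥ v₀ - b j := by
      rw [← le_div_iff₀ (by linarith : (0:ℝ) < -(A j ⬝ᵥ d))]; exact h1
    nlinarith
  · push_neg at hneg
    nlinarith [hvj j]

theorem transpose_mulVec_eq_sum {m n : ℕ} (A : Matrix (Fin m) (Fin n) ℝ) (ρ : Fin m → ℝ) :
    Aᵀ.mulVec ρ = ∑ k, ρ k • A k := by
  ext i
  simp [Matrix.mulVec, dotProduct, Matrix.transpose_apply, Finset.sum_apply, mul_comm]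

theorem key {m n : ℕ} (A : Matrix (Fin m) (Fin n) ℝ) (b : Fin m → ℝ)
    (c' : Fin n → ℝ) (v₀ : Fin n → ℝ) (hv : v₀ ∈ polyV A b)
    (hmin : ∀ v ∈ polyV A b, c' ⬝ᵥ v₀ ≤ c' ⬝ᵥ v)
    (huniq : ∀ v ∈ polyV A b, c' ⬝ᵥ v = c' ⬝ᵥ v₀ → v = v₀) :
    ∃ (T : ℝ) (ρ : Fin m → ℝ), 1 ≤ T ∧ Aᵀ.mulVec ρ = T • c' ∧
      (∀ j, A j ⬝ᵥ v₀ = b j → 1 ≤ ρ j) ∧ (∀ j, A j ⬝ᵥ v₀ ≠ b j → ρ j = 0) := by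
  classical
  set w : Fin (m+1) → (Fin n → ℝ) :=
    fun i => Fin.lastCases (-c') (fun j => if A j ⬝ᵥ v₀ = b j then A j else 0) i with hw
  have hw_last : w (Fin.last m) = -c' := by simp [hw]
  have hw_cast : ∀ j : Fin m, w j.castSucc = if A j ⬝ᵥ v₀ = b j then A j else 0 := by
    intro j; simp [hw]
  have hdir : ∀ d : Fin n → ℝ, (∀ i, 0 ≤ w i ⬝ᵥ d) → d = 0 := by
    intro d hdd
    have hact : ∀ j, A j ⬝ᵥ v₀ = b j → 0 ≤ A j ⬝ᵥ d := by
      intro j hj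
      have h := hdd j.castSucc
      rw [hw_cast, if_pos hj] at h; exact h
    have hcd : c' ⬝ᵥ d ≤ 0 := by
      have h := hdd (Fin.last m)
      rw [hw_last, neg_dotProduct] at h
      linarith
    obtain ⟨t, ht, hmem⟩ := feasDir A b v₀ hv d hact
    have h1 := hmin _ hmem
    have hlin : c' ⬝ᵥ (v₀ + t • d) = c' ⬝ᵥ v₀ + t * (c' ⬝ᵥ d) := by
      simp [dotProduct_add, dotProduct_smul, smul_eq_mul]
    rw [hlin] at h1
    have hcd0 : c' ⬝ᵥ d = 0 := by nlinarith
    have heq := huniq _ hmem (by rw [hlin, hcd0]; ring)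
    have htd : t • d = 0 := by
      have : v₀ + t • d = v₀ + 0 := by rw [add_zero]; exact heq
      exact add_left_cancel this
    have := smul_eq_zero.mp htd
    rcases this with h | h
    · exact absurd h ht.ne'
    · exact h
  obtain ⟨rb, hrb0, hrbsum, hrblast⟩ := tucker w (Fin.last m) (by
    rintro ⟨d, hdd, hpos⟩
    rw [hdir d hdd] at hpos
    simp at hpos)
  have hσ : ∀ j : Fin m, ∃ σ : Fin (m+1) → ℝ, (∀ i, 0 ≤ σ i) ∧ (∑ i, σ i • w i = 0) ∧
      (A j ⬝ᵥ v₀ = b j → 1 ≤ σ j.castSucc) := by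
    intro j
    by_cases hact : A j ⬝ᵥ v₀ = b j
    · obtain ⟨σ, h1, h2, h3⟩ := tucker w j.castSucc (by
        rintro ⟨d, hdd, hpos⟩
        rw [hdir d hdd] at hpos
        simp at hpos)
      exact ⟨σ, h1, h2, fun _ => h3⟩
    · exact ⟨0, fun i => le_refl _, by simp, fun h => absurd h hact⟩
  choose σ hσ0 hσsum hσact using hσ
  set act := Finset.univ.filter (fun j : Fin m => A j ⬝ᵥ v₀ = b j) with hact_def
  set ρ : Fin m → ℝ := fun k =>
    if A k ⬝ᵥ v₀ = b k then rb k.castSucc + ∑ j ∈ act, σ j k.castSucc else 0 with hρ_def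
  set T : ℝ := rb (Fin.last m) + ∑ j ∈ act, σ j (Fin.last m) with hT_def
  have stepA : ∀ ν : Fin (m+1) → ℝ, (∑ i, ν i • w i = 0) →
      ∑ k : Fin m, (if A k ⬝ᵥ v₀ = b k then ν k.castSucc else 0) • A k
        = ν (Fin.last m) • c' := by
    intro ν hν
    have h1 : ∀ k : Fin m,
        (if A k ⬝ᵥ v₀ = b k then ν k.castSucc else 0) • A k = ν k.castSucc • w k.castSucc := by
      intro k
      rw [hw_cast]
      by_cases h : A k ⬝ᵥ v₀ = b k
      · rw [if_pos h, if_pos h]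
      · rw [if_neg h, if_neg h]; simp
    rw [Finset.sum_congr rfl (fun k _ => h1 k)]
    have h2 := (Fin.sum_univ_castSucc (fun i => ν i • w i)).symm.trans hν
    rw [hw_last] at h2
    have h3 : ∑ k : Fin m, ν k.castSucc • w k.castSucc = -(ν (Fin.last m) • (-c')) :=
      eq_neg_of_add_eq_zero_left h2
    rw [h3, smul_neg, neg_neg]
  have hT1 : 1 ≤ T := by
    rw [hT_def]
    have : 0 ≤ ∑ j ∈ act, σ j (Fin.last m) :=
      Finset.sum_nonneg fun j _ => hσ0 j (Fin.last m)
    linarith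
  refine ⟨T, ρ, hT1, ?_, ?_, ?_⟩
  · rw [transpose_mulVec_eq_sum]
    have hsplit : ∀ k : Fin m, ρ k • A k =
        (if A k ⬝ᵥ v₀ = b k then rb k.castSucc else 0) • A k
        + ∑ j ∈ act, (if A k ⬝ᵥ v₀ = b k then σ j k.castSucc else 0) • A k := by
      intro k
      rw [hρ_def]
      by_cases h : A k ⬝ᵥ v₀ = b k
      · simp only [if_pos h]
        rw [add_smul, Finset.sum_smul]
      · simp only [if_neg h]
        simp
    calc ∑ k, ρ k • A k
        = ∑ k, ((if A k ⬝ᵥ v₀ = b k then rb k.castSucc else 0) • A k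
            + ∑ j ∈ act, (if A k ⬝ᵥ v₀ = b k then σ j k.castSucc else 0) • A k) :=
          Finset.sum_congr rfl fun k _ => hsplit k
      _ = (∑ k, (if A k ⬝ᵥ v₀ = b k then rb k.castSucc else 0) • A k)
            + ∑ j ∈ act, ∑ k, (if A k ⬝ᵥ v₀ = b k then σ j k.castSucc else 0) • A k := by
          rw [Finset.sum_add_distrib, Finset.sum_comm]
      _ = rb (Fin.last m) • c' + ∑ j ∈ act, σ j (Fin.last m) • c' := by
          rw [stepA rb hrbsum]
          congr 1
          exact Finset.sum_congr rfl fun j _ => stepA (σ j) (hσsum j)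
      _ = T • c' := by
          rw [hT_def, add_smul, Finset.sum_smul]
  · intro j hj
    have hjmem : j ∈ act := by rw [hact_def]; simp [hj]
    have h1 : σ j j.castSucc ≤ ∑ j' ∈ act, σ j' j.castSucc :=
      Finset.single_le_sum (fun j' _ => hσ0 j' j.castSucc) hjmem
    have h2 := hσact j hj
    have h3 := hrb0 j.castSucc
    rw [hρ_def]
    simp only [if_pos hj]
    linarith
  · intro j hj
    rw [hρ_def]
    simp only [if_neg hj]

theorem polyV_isClosed {m n : ℕ} (A : Matrix (Fin m) (Fin n) ℝ) (b : Fin m → ℝ) :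
    IsClosed (polyV A b) := by
  have h : polyV A b = A.mulVecLin ⁻¹' (Ici b) := by
    ext v; simp [polyV, mem_Ici, Matrix.mulVecLin]
  rw [h]
  exact IsClosed.preimage (LinearMap.continuous_of_finiteDimensional _) isClosed_Ici

theorem dot_continuous {n : ℕ} (c : Fin n → ℝ) : Continuous fun v : Fin n → ℝ => c ⬝ᵥ v := by
  unfold dotProduct
  exact continuous_finset_sum _ fun i _ => continuous_const.mul (continuous_apply i)

theorem exists_min {m n : ℕ} (A : Matrix (Fin m) (Fin n) ℝ) (b : Fin m → ℝ)
    (hne : (polyV A b).Nonempty) (hbd : Bornology.IsBounded (polyV A b)) (c : Fin n → ℝ) :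
    ∃ v₀ ∈ polyV A b, c ⬝ᵥ v₀ = zstar A b c ∧ ∀ v ∈ polyV A b, c ⬝ᵥ v₀ ≤ c ⬝ᵥ v := by
  have hcomp : IsCompact (polyV A b) :=
    Metric.isCompact_of_isClosed_isBounded (polyV_isClosed A b) hbd
  obtain ⟨v₀, hv₀, hmin⟩ := hcomp.exists_isMinOn hne (dot_continuous c).continuousOn
  have hmin' : ∀ v ∈ polyV A b, c ⬝ᵥ v₀ ≤ c ⬝ᵥ v := fun v hv => hmin hv
  refine ⟨v₀, hv₀, ?_, hmin'⟩
  apply le_antisymm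
  · apply le_csInf (hne.image _)
    rintro y ⟨v, hv, rfl⟩
    exact hmin' v hv
  · apply csInf_le
    · refine ⟨c ⬝ᵥ v₀, ?_⟩
      rintro y ⟨v, hv, rfl⟩
      exact hmin' v hv
    · exact ⟨v₀, hv₀, rfl⟩

theorem stmt_0 (m n N K : ℕ)
    (A : Matrix (Fin m) (Fin n) ℝ) (b : Fin m → ℝ)
    (hne : (polyV A b).Nonempty) (hbd : Bornology.IsBounded (polyV A b))
    (x : Fin N → Fin K → ℝ) (c : Fin N → Fin n → ℝ)
    (vopt : Fin N → Fin n → ℝ)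
    (hunique : ∀ i, Vstar A b (c i) = {vopt i}) :
    (∃ ω : Matrix (Fin n) (Fin K) ℝ,
        ∀ i, ∀ v ∈ Vstar A b (ω.mulVec (x i)), c i ⬝ᵥ v = zstar A b (c i)) ↔
    (∃ (ω : Matrix (Fin n) (Fin K) ℝ) (ρ : Fin N → Fin m → ℝ),
        ∀ i, Aᵀ.mulVec (ρ i) = ω.mulVec (x i) ∧
          (∀ j, A j ⬝ᵥ vopt i = b j → 1 ≤ ρ i j) ∧
          (∀ j, A j ⬝ᵥ vopt i ≠ b j → ρ i j = 0)) := by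
  have hvopt_star : ∀ i, vopt i ∈ Vstar A b (c i) := by
    intro i; rw [hunique i]; exact Set.mem_singleton _
  constructor
  · rintro ⟨ω, hω⟩
    have hkey : ∀ i, ∃ (T : ℝ) (ρ : Fin m → ℝ), 1 ≤ T ∧
        Aᵀ.mulVec ρ = T • (ω.mulVec (x i)) ∧
        (∀ j, A j ⬝ᵥ vopt i = b j → 1 ≤ ρ j) ∧
        (∀ j, A j ⬝ᵥ vopt i ≠ b j → ρ j = 0) := by
      intro i
      set c' := ω.mulVec (x i) with hc'
      obtain ⟨v₀, hv₀, hz, hminv⟩ := exists_min A b hne hbd c'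
      have hv₀star : v₀ ∈ Vstar A b c' := ⟨hv₀, hz⟩
      have h1 : ∀ v ∈ Vstar A b c', v = vopt i := by
        intro v hvs
        have h2 : v ∈ Vstar A b (c i) := ⟨hvs.1, hω i v hvs⟩
        rw [hunique i] at h2
        exact h2
      have hv₀eq : v₀ = vopt i := h1 v₀ hv₀star
      have hvoptV : vopt i ∈ polyV A b := hv₀eq ▸ hv₀
      have hminopt : ∀ v ∈ polyV A b, c' ⬝ᵥ vopt i ≤ c' ⬝ᵥ v := by
        intro v hv; rw [← hv₀eq]; exact hminv v hv
      apply key A b c' (vopt i) hvoptV hminopt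
      intro v hv hcv
      apply h1
      refine ⟨hv, ?_⟩
      rw [hcv, ← hv₀eq, hz]
    choose T ρ hT hsum hge hzero using hkey
    set t : ℝ := (∑ i, T i) + 1 with ht_def
    have hTle : ∀ i, T i ≤ t := by
      intro i
      have h1 : T i ≤ ∑ i', T i' :=
        Finset.single_le_sum (fun i' _ => by linarith [hT i']) (Finset.mem_univ i)
      rw [ht_def]; linarith
    have hTpos : ∀ i, (0:ℝ) < T i := fun i => by linarith [hT i]
    refine ⟨t • ω, fun i => (t / T i) • ρ i, fun i => ⟨?_, ?_, ?_⟩⟩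
    · rw [Matrix.mulVec_smul, hsum i, Matrix.smul_mulVec, smul_smul,
        div_mul_cancel₀ _ (hTpos i).ne']
    · intro j hj
      have h1 : (1:ℝ) ≤ t / T i := by
        rw [le_div_iff₀ (hTpos i)]; linarith [hTle i]
      have h2 := hge i j hj
      show (1:ℝ) ≤ (t / T i) * ρ i j
      nlinarith
    · intro j hj
      show (t / T i) * ρ i j = 0
      rw [hzero i j hj, mul_zero]
  · rintro ⟨ω, ρ, hρ⟩
    refine ⟨ω, fun i v hv => ?_⟩
    obtain ⟨hsum, hge, hzero⟩ := hρ i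
    set c' := ω.mulVec (x i) with hc'
    have hρ0 : ∀ j, 0 ≤ ρ i j := by
      intro j
      by_cases h : A j ⬝ᵥ vopt i = b j
      · linarith [hge j h]
      · rw [hzero j h]
    obtain ⟨hvoptV, hvoptz⟩ := hvopt_star i
    have hdot : ∀ u : Fin n → ℝ, c' ⬝ᵥ u = ∑ j, ρ i j * (A j ⬝ᵥ u) := by
      intro u
      rw [← hsum, transpose_mulVec_eq_sum]
      simp only [dotProduct, Finset.sum_apply, Pi.smul_apply, smul_eq_mul,
        Finset.sum_mul, Finset.mul_sum]
      rw [Finset.sum_comm]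
      exact Finset.sum_congr rfl fun j _ => Finset.sum_congr rfl fun idx _ => by ring
    obtain ⟨hvV, hvz⟩ := hv
    obtain ⟨u₀, hu₀, hz₀, hmin₀⟩ := exists_min A b hne hbd c'
    have h1 : c' ⬝ᵥ v ≤ c' ⬝ᵥ vopt i := by
      rw [hvz, ← hz₀]; exact hmin₀ _ hvoptV
    have h2 : c' ⬝ᵥ vopt i = ∑ j, ρ i j * b j := by
      rw [hdot]
      refine Finset.sum_congr rfl fun j _ => ?_
      by_cases h : A j ⬝ᵥ vopt i = b j
      · rw [h]
      · rw [hzero j h]; ring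
    have h3 : ∀ j, ρ i j * b j ≤ ρ i j * (A j ⬝ᵥ v) := fun j =>
      mul_le_mul_of_nonneg_left (mem_polyV_iff.mp hvV j) (hρ0 j)
    have h4 : c' ⬝ᵥ vopt i ≤ c' ⬝ᵥ v := by
      rw [h2, hdot]
      exact Finset.sum_le_sum fun j _ => h3 j
    have h5 : c' ⬝ᵥ v = c' ⬝ᵥ vopt i := le_antisymm h1 h4
    have h6 : ∑ j, (ρ i j * (A j ⬝ᵥ v) - ρ i j * b j) = 0 := by
      rw [Finset.sum_sub_distrib, ← hdot, ← h2, h5, sub_self]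
    have h8 := (Finset.sum_eq_zero_iff_of_nonneg
      (fun j _ => by linarith [h3 j] : ∀ j ∈ Finset.univ, 0 ≤ ρ i j * (A j ⬝ᵥ v) - ρ i j * b j)).mp h6
    have hactivev : ∀ j, A j ⬝ᵥ vopt i = b j → A j ⬝ᵥ v = b j := by
      intro j hj
      have hz := h8 j (Finset.mem_univ j)
      have hgej := hge j hj
      have hmul : ρ i j * (A j ⬝ᵥ v - b j) = 0 := by linarith
      rcases mul_eq_zero.mp hmul with h | h
      · linarith
      · linarith
    set d := v - vopt i with hd
    have hdact : ∀ j, A j ⬝ᵥ vopt i = b j → A j ⬝ᵥ d = 0 := by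
      intro j hj
      rw [hd, dotProduct_sub, hactivev j hj, hj, sub_self]
    have side : ∀ d' : Fin n → ℝ, (∀ j, A j ⬝ᵥ vopt i = b j → A j ⬝ᵥ d' = 0) →
        0 ≤ c i ⬝ᵥ d' := by
      intro d' hd'
      obtain ⟨s, hs, hmem⟩ := feasDir A b (vopt i) hvoptV d' (fun j hj => (hd' j hj).ge)
      obtain ⟨u₁, hu₁, hz₁, hmin₁⟩ := exists_min A b hne hbd (c i)
      have hle : c i ⬝ᵥ vopt i ≤ c i ⬝ᵥ (vopt i + s • d') := by
        rw [hvoptz, ← hz₁]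
        exact hmin₁ _ hmem
      have hlin : c i ⬝ᵥ (vopt i + s • d') = c i ⬝ᵥ vopt i + s * (c i ⬝ᵥ d') := by
        simp [dotProduct_add, dotProduct_smul, smul_eq_mul]
      rw [hlin] at hle
      nlinarith
    have hpos := side d hdact
    have hneg := side (-d) (fun j hj => by rw [dotProduct_neg, hdact j hj, neg_zero])
    rw [dotProduct_neg] at hneg
    have hzero' : c i ⬝ᵥ d = 0 := le_antisymm (by linarith) hpos
    have : c i ⬝ᵥ v = c i ⬝ᵥ vopt i := by
      rw [hd, dotProduct_sub] at hzero'
      linarith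
    rw [this, hvoptz]
end
end

section
/- Let A be a real m×n matrix, b ∈ ℝ^m, and assume V = {v ∈ ℝ^n : A v ≥ b} is nonempty and bounded. Let (x^i, c^i), i = 1,…,N, be data with x^i ∈ ℝ^K and c^i ∈ ℝ^n, and for ω ∈ ℝ^{n×K} define the pessimistic regret Regret(ω) = sup{(1/N) Σ_{i=1}^N (c^i · v^i − z*(c^i)) : v^i ∈ V*(ω x^i) for each i}. Then the set of values {Regret(ω) : ω ∈ ℝ^{n×K}} is finite. -/
open Matrix Set BigOperators

noncomputable section

/-- The pessimistic regret of the linear model `ω`. -/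
noncomputable def pessRegret {m n N K : ℕ} (A : Matrix (Fin m) (Fin n) ℝ) (b : Fin m → ℝ)
    (x : Fin N → Fin K → ℝ) (c : Fin N → Fin n → ℝ)
    (ω : Matrix (Fin n) (Fin K) ℝ) : ℝ :=
  sSup {r : ℝ | ∃ v : Fin N → Fin n → ℝ,
    (∀ i, v i ∈ Vstar A b (ω.mulVec (x i))) ∧
    r = (1 / (N : ℝ)) * ∑ i, (c i ⬝ᵥ v i - zstar A b (c i))}

namespace Stmt1Aux

variable {m n : ℕ}

/-- The dot product with a fixed vector, as a linear map. -/
def dotL {n : ℕ} (c : Fin n → ℝ) : (Fin n → ℝ) →ₗ[ℝ] ℝ where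
  toFun v := c ⬝ᵥ v
  map_add' u v := by simp [dotProduct_add]
  map_smul' a v := by simp

lemma continuous_dot {n : ℕ} (c : Fin n → ℝ) : Continuous fun v : Fin n → ℝ => c ⬝ᵥ v :=
  (dotL c).continuous_of_finiteDimensional

variable (A : Matrix (Fin m) (Fin n) ℝ) (b : Fin m → ℝ)

lemma isClosed_polyV : IsClosed (polyV A b) := by
  have hc : Continuous fun v : Fin n → ℝ => A.mulVec v :=
    (Matrix.mulVecLin A).continuous_of_finiteDimensional
  exact isClosed_le continuous_const hc

lemma convex_polyV : Convex ℝ (polyV A b) := by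
  intro u hu v hv a a' ha ha' hab
  intro j
  have h1 : A.mulVec (a • u + a' • v) j = a * A.mulVec u j + a' * A.mulVec v j := by
    simp [Matrix.mulVec_add, Matrix.mulVec_smul]
  have hu' := hu j
  have hv' := hv j
  simp only [Set.mem_setOf_eq] at h1 ⊢
  rw [h1]
  have h2 : a * b j + a' * b j = b j := by linear_combination (b j) * hab
  linarith [mul_le_mul_of_nonneg_left hu' ha, mul_le_mul_of_nonneg_left hv' ha']

lemma isCompact_polyV (hbd : Bornology.IsBounded (polyV A b)) : IsCompact (polyV A b) :=
  Metric.isCompact_of_isClosed_isBounded (isClosed_polyV A b) hbd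

lemma exists_min (hbd : Bornology.IsBounded (polyV A b)) (hne : (polyV A b).Nonempty) (c : Fin n → ℝ) : ∃ v ∈ polyV A b, c ⬝ᵥ v = zstar A b c := by
  have himg : IsCompact ((fun v => c ⬝ᵥ v) '' polyV A b) :=
    (isCompact_polyV A b hbd).image (continuous_dot c)
  obtain ⟨v, hv, hv2⟩ := himg.sInf_mem (hne.image _)
  exact ⟨v, hv, hv2⟩

lemma zstar_le (hbd : Bornology.IsBounded (polyV A b)) (c : Fin n → ℝ) {y : Fin n → ℝ} (hy : y ∈ polyV A b) :
    zstar A b c ≤ c ⬝ᵥ y := by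
  have himg : IsCompact ((fun v => c ⬝ᵥ v) '' polyV A b) :=
    (isCompact_polyV A b hbd).image (continuous_dot c)
  exact csInf_le himg.bddBelow (Set.mem_image_of_mem _ hy)

lemma isExtreme_Vstar (hbd : Bornology.IsBounded (polyV A b)) (hne : (polyV A b).Nonempty) (c : Fin n → ℝ) : IsExtreme ℝ (polyV A b) (Vstar A b c) := by
  have hVs : Vstar A b c =
      ((-(LinearMap.toContinuousLinearMap (dotL c)))).toExposed (polyV A b) := by
    ext v
    constructor
    · rintro ⟨hvV, hvz⟩
      refine ⟨hvV, fun y hy => ?_⟩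
      have h1 : zstar A b c ≤ c ⬝ᵥ y := zstar_le A b hbd c hy
      simp only [ContinuousLinearMap.neg_apply, LinearMap.coe_toContinuousLinearMap']
      show -(dotL c y) ≤ -(dotL c v)
      simp only [dotL, LinearMap.coe_mk, AddHom.coe_mk]
      linarith
    · rintro ⟨hvV, hmax⟩
      refine ⟨hvV, le_antisymm ?_ (zstar_le A b hbd c hvV)⟩
      obtain ⟨w, hwV, hwz⟩ := exists_min A b hbd hne c
      have := hmax w hwV
      simp only [ContinuousLinearMap.neg_apply, LinearMap.coe_toContinuousLinearMap'] at this
      have h2 : -(c ⬝ᵥ w) ≤ -(c ⬝ᵥ v) := this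
      rw [← hwz]
      linarith
  rw [hVs]
  exact ContinuousLinearMap.toExposed.isExposed.isExtreme

lemma eq_zero_of_tight {v : Fin n → ℝ} (hv : v ∈ (polyV A b).extremePoints ℝ)
    {w : Fin n → ℝ} (hw : ∀ j, A.mulVec v j = b j → A.mulVec w j = 0) : w = 0 := by
  by_contra hw0
  obtain ⟨hvV, hext⟩ := mem_extremePoints.1 hv
  have hS : ∀ j : Fin m, {t : ℝ | b j ≤ A.mulVec v j + t * A.mulVec w j} ∈ nhds (0 : ℝ) := by
    intro j
    by_cases h : A.mulVec v j = b j
    · have hz := hw j h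
      have : {t : ℝ | b j ≤ A.mulVec v j + t * A.mulVec w j} = Set.univ := by
        ext t; simp [hz, hvV j]
      rw [this]; exact Filter.univ_mem
    · have hlt : b j < A.mulVec v j := lt_of_le_of_ne (hvV j) (Ne.symm h)
      have hcont : Continuous fun t : ℝ => A.mulVec v j + t * A.mulVec w j := by
        continuity
      have hopen : IsOpen {t : ℝ | b j < A.mulVec v j + t * A.mulVec w j} :=
        isOpen_lt continuous_const hcont
      have hmem : (0 : ℝ) ∈ {t : ℝ | b j < A.mulVec v j + t * A.mulVec w j} := by
        simpa using hlt
      exact Filter.mem_of_superset (hopen.mem_nhds hmem) fun t ht => show b j ≤ _ from le_of_lt ht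
  have hall : {t : ℝ | ∀ j, b j ≤ A.mulVec v j + t * A.mulVec w j} ∈ nhds (0 : ℝ) := by
    have h1 : (⋂ j, {t : ℝ | b j ≤ A.mulVec v j + t * A.mulVec w j}) ∈ nhds (0 : ℝ) :=
      Filter.iInter_mem.2 hS
    have h2 : (⋂ j, {t : ℝ | b j ≤ A.mulVec v j + t * A.mulVec w j}) =
        {t : ℝ | ∀ j, b j ≤ A.mulVec v j + t * A.mulVec w j} := by
      ext t; simp
    rwa [h2] at h1
  obtain ⟨ε, hε, hball⟩ := Metric.mem_nhds_iff.1 hall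
  set t : ℝ := ε / 2 with ht
  have htpos : 0 < t := by positivity
  have hmemball : ∀ s : ℝ, |s| < ε → ∀ j, b j ≤ A.mulVec v j + s * A.mulVec w j := by
    intro s hs
    have : s ∈ Metric.ball (0 : ℝ) ε := by simpa [Real.dist_eq] using hs
    exact hball this
  have habs : |t| < ε := by rw [abs_of_pos htpos]; linarith
  have habs' : |(-t)| < ε := by rw [abs_neg]; exact habs
  have hmemV : ∀ s : ℝ, |s| < ε → v + s • w ∈ polyV A b := by
    intro s hs j
    have := hmemball s hs j
    have hcalc : A.mulVec (v + s • w) j = A.mulVec v j + s * A.mulVec w j := by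
      simp [Matrix.mulVec_add, Matrix.mulVec_smul]
    simp only [Set.mem_setOf_eq]
    rw [hcalc]
    exact this
  have h1 : v + t • w ∈ polyV A b := hmemV t habs
  have h2 : v - t • w ∈ polyV A b := by
    have := hmemV (-t) habs'
    simpa [sub_eq_add_neg, neg_smul] using this
  have hseg : v ∈ openSegment ℝ (v - t • w) (v + t • w) := by
    refine ⟨1/2, 1/2, by norm_num, by norm_num, by norm_num, ?_⟩
    module
  have := (hext _ h2 _ h1 hseg).1
  have htw : t • w = 0 := by
    have h3 : v - t • w = v := this
    have := sub_eq_self.1 h3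
    exact this
  exact hw0 (by simpa [htpos.ne'] using htw)

lemma finite_extremePoints : ((polyV A b).extremePoints ℝ).Finite := by
  have key : Set.InjOn (fun v => {j : Fin m | A.mulVec v j = b j})
      ((polyV A b).extremePoints ℝ) := by
    intro u hu v hv h
    have h1 : ∀ j, A.mulVec u j = b j → A.mulVec (u - v) j = 0 := by
      intro j hj
      have hj' : A.mulVec v j = b j := by
        have := Set.ext_iff.1 h j
        simpa [hj] using this.1 hj
      have : A.mulVec (u - v) j = A.mulVec u j - A.mulVec v j := by
        simp [Matrix.mulVec_sub]
      rw [this, hj, hj', sub_self]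
    have := eq_zero_of_tight A b hu h1
    exact sub_eq_zero.1 this
  exact Set.Finite.of_finite_image (Set.toFinite _) key

lemma Vstar_eq_convexHull (hbd : Bornology.IsBounded (polyV A b)) (hne : (polyV A b).Nonempty) (c : Fin n → ℝ) :
    Vstar A b c = convexHull ℝ ((Vstar A b c).extremePoints ℝ) := by
  have hVsub : Vstar A b c ⊆ polyV A b := fun v hv => hv.1
  have hclosed : IsClosed (Vstar A b c) := by
    have h1 : IsClosed {v : Fin n → ℝ | c ⬝ᵥ v = zstar A b c} :=
      isClosed_eq (continuous_dot c) continuous_const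
    exact (isClosed_polyV A b).inter h1
  have hcomp : IsCompact (Vstar A b c) :=
    (isCompact_polyV A b hbd).of_isClosed_subset hclosed hVsub
  have hconv : Convex ℝ (Vstar A b c) := by
    intro u hu v hv a a' ha ha' hab
    refine ⟨convex_polyV A b hu.1 hv.1 ha ha' hab, ?_⟩
    have : c ⬝ᵥ (a • u + a' • v) = a * (c ⬝ᵥ u) + a' * (c ⬝ᵥ v) := by
      simp [dotProduct_add]
    rw [this, hu.2, hv.2]
    ring_nf
    linear_combination (zstar A b c) * hab
  have hKM := closure_convexHull_extremePoints hcomp hconv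
  have hsub : (Vstar A b c).extremePoints ℝ ⊆ (polyV A b).extremePoints ℝ :=
    (isExtreme_Vstar A b hbd hne c).extremePoints_subset_extremePoints
  have hfin : ((Vstar A b c).extremePoints ℝ).Finite :=
    (finite_extremePoints A b).subset hsub
  rw [← (hfin.isClosed_convexHull ℝ).closure_eq, hKM]

lemma finite_range_Vstar (hbd : Bornology.IsBounded (polyV A b)) (hne : (polyV A b).Nonempty) : (Set.range (Vstar A b)).Finite := by
  have hsub : Set.range (Vstar A b) ⊆
      (fun s => convexHull ℝ s) '' {s | s ⊆ (polyV A b).extremePoints ℝ} := by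
    rintro _ ⟨c, rfl⟩
    exact ⟨(Vstar A b c).extremePoints ℝ,
      (isExtreme_Vstar A b hbd hne c).extremePoints_subset_extremePoints,
      (Vstar_eq_convexHull A b hbd hne c).symm⟩
  exact (((finite_extremePoints A b).finite_subsets).image _).subset hsub

end Stmt1Aux

theorem stmt_1 (m n N K : ℕ)
    (A : Matrix (Fin m) (Fin n) ℝ) (b : Fin m → ℝ)
    (hne : (polyV A b).Nonempty) (hbd : Bornology.IsBounded (polyV A b))
    (x : Fin N → Fin K → ℝ) (c : Fin N → Fin n → ℝ) :
    (Set.range fun ω : Matrix (Fin n) (Fin K) ℝ => pessRegret A b x c ω).Finite := by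
  classical
  set G : (Fin N → Set (Fin n → ℝ)) → ℝ := fun S => sSup {r : ℝ | ∃ v : Fin N → Fin n → ℝ,
    (∀ i, v i ∈ S i) ∧
    r = (1 / (N : ℝ)) * ∑ i, (c i ⬝ᵥ v i - zstar A b (c i))} with hG
  have hsub : (Set.range fun ω : Matrix (Fin n) (Fin K) ℝ => pessRegret A b x c ω) ⊆
      G '' {S : Fin N → Set (Fin n → ℝ) | ∀ i, S i ∈ Set.range (Vstar A b)} := by
    rintro _ ⟨ω, rfl⟩
    exact ⟨fun i => Vstar A b (ω.mulVec (x i)), fun i => ⟨_, rfl⟩, rfl⟩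
  exact ((Set.Finite.pi' fun i => Stmt1Aux.finite_range_Vstar A b hbd hne).image G).subset hsub
end
end

section
/- Let A be a real m×n matrix, b ∈ ℝ^m, and assume V = {v ∈ ℝ^n : A v ≥ b} is nonempty and bounded. Fix ω ∈ ℝ^{n×K} and data (x^i, c^i), i = 1,…,N. Suppose μ^i ∈ ℝ^m, δ^i ∈ ℝ^n and γ^i ∈ ℝ satisfy, for every i: A^T μ^i + γ^i (ω x^i) = (1/N) c^i, A δ^i − γ^i b ≥ 0, μ^i ≤ 0 and γ^i ≥ 0. Then for every choice of v^i ∈ V*(ω x^i), i = 1,…,N, one has (1/N) Σ_{i=1}^N c^i · v^i ≤ Σ_{i=1}^N ( b · μ^i + (ω x^i) · δ^i ). -/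
open Matrix Set BigOperators

noncomputable section

-- aux: image is bounded below
lemma bddBelow_aux {m n : ℕ} (A : Matrix (Fin m) (Fin n) ℝ) (b : Fin m → ℝ)
    (hbd : Bornology.IsBounded (polyV A b)) (c : Fin n → ℝ) :
    BddBelow ((fun v => c ⬝ᵥ v) '' polyV A b) := by
  have hlin : IsLinearMap ℝ (fun v : Fin n → ℝ => c ⬝ᵥ v) := by
    constructor
    · intro u w; simp [dotProduct_add]
    · intro a u; simp [dotProduct_smul]
  let f : (Fin n → ℝ) →L[ℝ] ℝ := LinearMap.toContinuousLinearMap hlin.mk'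
  have : Bornology.IsBounded ((fun v => c ⬝ᵥ v) '' polyV A b) := by
    have := (f.lipschitz).isBounded_image hbd
    exact this
  exact this.bddBelow

-- aux: recession direction is zero
lemma recession_zero {m n : ℕ} (A : Matrix (Fin m) (Fin n) ℝ) (b : Fin m → ℝ)
    (hne : (polyV A b).Nonempty) (hbd : Bornology.IsBounded (polyV A b))
    (d : Fin n → ℝ) (hd : 0 ≤ A.mulVec d) : d = 0 := by
  obtain ⟨v0, hv0⟩ := hne
  obtain ⟨R, hR⟩ := hbd.exists_norm_le
  by_contra h
  have hdn : 0 < ‖d‖ := norm_pos_iff.mpr h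
  set t : ℝ := (R + ‖v0‖ + 1) / ‖d‖ with ht
  have hR0 : 0 ≤ R := le_trans (norm_nonneg v0) (hR v0 hv0)
  have htpos : 0 ≤ t := by positivity
  have hmem : v0 + t • d ∈ polyV A b := by
    simp only [polyV, Set.mem_setOf_eq] at hv0 ⊢
    rw [Matrix.mulVec_add, Matrix.mulVec_smul]
    intro j
    have := hv0 j
    have h2 : 0 ≤ t * A.mulVec d j := mul_nonneg htpos (hd j)
    simp only [Pi.add_apply, Pi.smul_apply, smul_eq_mul]
    linarith
  have := hR _ hmem
  have h1 : ‖t • d‖ ≤ ‖v0 + t • d‖ + ‖v0‖ := by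
    calc ‖t • d‖ = ‖(v0 + t • d) - v0‖ := by rw [add_sub_cancel_left]
      _ ≤ ‖v0 + t • d‖ + ‖v0‖ := norm_sub_le _ _
  have h2 : ‖t • d‖ = t * ‖d‖ := by
    rw [norm_smul, Real.norm_eq_abs, abs_of_nonneg htpos]
  have h3 : t * ‖d‖ = R + ‖v0‖ + 1 := by
    rw [ht, div_mul_cancel₀ _ hdn.ne']
  linarith
theorem stmt_6 (m n N K : ℕ)
    (A : Matrix (Fin m) (Fin n) ℝ) (b : Fin m → ℝ)
    (hne : (polyV A b).Nonempty) (hbd : Bornology.IsBounded (polyV A b))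
    (ω : Matrix (Fin n) (Fin K) ℝ)
    (x : Fin N → Fin K → ℝ) (c : Fin N → Fin n → ℝ)
    (μ : Fin N → Fin m → ℝ) (δ : Fin N → Fin n → ℝ) (γ : Fin N → ℝ)
    (hfeas : ∀ i, Aᵀ.mulVec (μ i) + γ i • ω.mulVec (x i) = (1 / (N : ℝ)) • c i ∧
        γ i • b ≤ A.mulVec (δ i) ∧ μ i ≤ 0 ∧ 0 ≤ γ i) :
    ∀ v : Fin N → Fin n → ℝ, (∀ i, v i ∈ Vstar A b (ω.mulVec (x i))) →
      (1 / (N : ℝ)) * ∑ i, c i ⬝ᵥ v i ≤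
        ∑ i, (b ⬝ᵥ μ i + ω.mulVec (x i) ⬝ᵥ δ i) := by
  intro v hv
  rw [Finset.mul_sum]
  apply Finset.sum_le_sum
  intro i _
  obtain ⟨heq, hAδ, hμ, hγ⟩ := hfeas i
  obtain ⟨hvV, hvopt⟩ := hv i
  -- decompose
  have h1 : (1 / (N : ℝ)) * (c i ⬝ᵥ v i)
      = μ i ⬝ᵥ A.mulVec (v i) + γ i * (ω.mulVec (x i) ⬝ᵥ v i) := by
    have : ((1 / (N : ℝ)) • c i) ⬝ᵥ v i
        = (Aᵀ.mulVec (μ i) + γ i • ω.mulVec (x i)) ⬝ᵥ v i := by rw [heq]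
    rw [smul_dotProduct, add_dotProduct, smul_dotProduct,
      Matrix.mulVec_transpose, ← Matrix.dotProduct_mulVec] at this
    simpa using this
  rw [h1]
  have hμb : μ i ⬝ᵥ A.mulVec (v i) ≤ b ⬝ᵥ μ i := by
    rw [dotProduct_comm b]
    apply Finset.sum_le_sum
    intro j _
    exact mul_le_mul_of_nonpos_left (hvV j) (hμ j)
  have hγδ : γ i * (ω.mulVec (x i) ⬝ᵥ v i) ≤ ω.mulVec (x i) ⬝ᵥ δ i := by
    rcases eq_or_lt_of_le hγ with hγ0 | hγpos
    · have hd : δ i = 0 := by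
        apply recession_zero A b hne hbd
        have : (0 : Fin m → ℝ) = γ i • b := by rw [← hγ0]; simp
        rw [this]; exact hAδ
      rw [← hγ0, hd]; simp
    · have hmem : (γ i)⁻¹ • δ i ∈ polyV A b := by
        intro j
        rw [Matrix.mulVec_smul]
        have := hAδ j
        simp only [Pi.smul_apply, smul_eq_mul] at this ⊢
        calc b j = (γ i)⁻¹ * (γ i * b j) := by field_simp
          _ ≤ (γ i)⁻¹ * A.mulVec (δ i) j :=
            mul_le_mul_of_nonneg_left this (by positivity)
      have hle : ω.mulVec (x i) ⬝ᵥ v i ≤ ω.mulVec (x i) ⬝ᵥ ((γ i)⁻¹ • δ i) := by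
        rw [hvopt]
        exact csInf_le (bddBelow_aux A b hbd _) ⟨_, hmem, rfl⟩
      have := mul_le_mul_of_nonneg_left hle (le_of_lt hγpos)
      calc γ i * (ω.mulVec (x i) ⬝ᵥ v i)
          ≤ γ i * (ω.mulVec (x i) ⬝ᵥ ((γ i)⁻¹ • δ i)) := this
        _ = ω.mulVec (x i) ⬝ᵥ δ i := by
            rw [dotProduct_smul]
            rw [smul_eq_mul, ← mul_assoc, mul_inv_cancel₀ hγpos.ne', one_mul]
  linarith
end
end

section
/- Let A be a real m×n matrix with rows a_1,…,a_m, b ∈ ℝ^m, and assume V = {v ∈ ℝ^n : A v ≥ b} is nonempty and bounded. Let x^1,…,x^N ∈ ℝ^K and ω̂ ∈ ℝ^{n×K}, and suppose that for each i = 1,…,N there is ρ̂^i ∈ ℝ^m with ρ̂^i ≥ 0, A^T ρ̂^i = ω̂ x^i, and such that V*(ω̂ x^i) = {v ∈ V : a_j · v = b_j for every j with ρ̂^i_j > 0}. If ω̃ ∈ ℝ^{n×K} and ρ̃^1,…,ρ̃^N ∈ ℝ^m satisfy, for every i, A^T ρ̃^i = ω̃ x^i, ρ̃^i_j ≥ 1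 for every j with ρ̂^i_j > 0, and ρ̃^i_j = 0 for every j with ρ̂^i_j = 0, then V*(ω̃ x^i) = V*(ω̂ x^i) for every i = 1,…,N. -/
open Matrix Set BigOperators

noncomputable section

lemma vstar_nonempty {m n : ℕ} (A : Matrix (Fin m) (Fin n) ℝ) (b : Fin m → ℝ)
    (hne : (polyV A b).Nonempty) (hbd : Bornology.IsBounded (polyV A b)) (c : Fin n → ℝ) :
    (Vstar A b c).Nonempty := by
  have hcont : Continuous fun v : Fin n → ℝ => c ⬝ᵥ v := by
    unfold dotProduct
    exact continuous_finset_sum _ fun k _ => continuous_const.mul (continuous_apply k)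
  have hclosed : IsClosed (polyV A b) := by
    have : polyV A b = ⋂ j, {v | b j ≤ A j ⬝ᵥ v} := by
      ext v; simp [polyV, Pi.le_def, Set.mem_iInter, Matrix.mulVec]
    rw [this]
    refine isClosed_iInter fun j => isClosed_le continuous_const ?_
    unfold dotProduct
    exact continuous_finset_sum _ fun k _ => continuous_const.mul (continuous_apply k)
  have hcompact : IsCompact (polyV A b) := Metric.isCompact_of_isClosed_isBounded hclosed hbd
  obtain ⟨v₀, hv₀, hmin⟩ := hcompact.exists_isMinOn hne hcont.continuousOn
  refine ⟨v₀, hv₀, ?_⟩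
  apply le_antisymm
  · exact le_csInf (hne.image _) (by rintro y ⟨w, hw, rfl⟩; exact hmin hw)
  · exact csInf_le ⟨c ⬝ᵥ v₀, by rintro y ⟨w, hw, rfl⟩; exact hmin hw⟩ ⟨v₀, hv₀, rfl⟩

theorem stmt_10 (m n N K : ℕ)
    (A : Matrix (Fin m) (Fin n) ℝ) (b : Fin m → ℝ)
    (hne : (polyV A b).Nonempty) (hbd : Bornology.IsBounded (polyV A b))
    (x : Fin N → Fin K → ℝ)
    (ωhat : Matrix (Fin n) (Fin K) ℝ) (ρhat : Fin N → Fin m → ℝ)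
    (hhat : ∀ i, 0 ≤ ρhat i ∧ Aᵀ.mulVec (ρhat i) = ωhat.mulVec (x i) ∧
        Vstar A b (ωhat.mulVec (x i)) =
          {v ∈ polyV A b | ∀ j, 0 < ρhat i j → A j ⬝ᵥ v = b j})
    (ωt : Matrix (Fin n) (Fin K) ℝ) (ρt : Fin N → Fin m → ℝ)
    (ht : ∀ i, Aᵀ.mulVec (ρt i) = ωt.mulVec (x i) ∧
        (∀ j, 0 < ρhat i j → 1 ≤ ρt i j) ∧
        (∀ j, ρhat i j = 0 → ρt i j = 0)) :
    ∀ i, Vstar A b (ωt.mulVec (x i)) = Vstar A b (ωhat.mulVec (x i)) := by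
  intro i
  obtain ⟨hρhat_nn, hAρhat, hVstar⟩ := hhat i
  obtain ⟨hAρt, hρt_ge, hρt_eq⟩ := ht i
  have hρt_nn : ∀ j, 0 ≤ ρt i j := by
    intro j
    rcases (hρhat_nn j).lt_or_eq with h | h
    · linarith [hρt_ge j h]
    · rw [hρt_eq j h.symm]
  have hpos : ∀ j, 0 < ρt i j ↔ 0 < ρhat i j := by
    intro j
    constructor
    · intro h
      rcases (hρhat_nn j).lt_or_eq with h' | h'
      · exact h'
      · rw [hρt_eq j h'.symm] at h; exact absurd h (lt_irrefl 0)
    · intro h; linarith [hρt_ge j h]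
  have hdot : ∀ v, ωt.mulVec (x i) ⬝ᵥ v = ρt i ⬝ᵥ A.mulVec v := by
    intro v
    rw [← hAρt, Matrix.mulVec_transpose, ← Matrix.dotProduct_mulVec]
  have hAv : ∀ (v : Fin n → ℝ) (j : Fin m), A.mulVec v j = A j ⬝ᵥ v := fun _ _ => rfl
  have hlb : ∀ v ∈ polyV A b, ρt i ⬝ᵥ b ≤ ωt.mulVec (x i) ⬝ᵥ v := by
    intro v hv
    rw [hdot]
    exact Finset.sum_le_sum fun j _ => mul_le_mul_of_nonneg_left (hv j) (hρt_nn j)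
  have heq : ∀ v ∈ polyV A b,
      (ωt.mulVec (x i) ⬝ᵥ v = ρt i ⬝ᵥ b ↔ ∀ j, 0 < ρhat i j → A j ⬝ᵥ v = b j) := by
    intro v hv
    rw [hdot]
    constructor
    · intro h j hj
      by_contra hne'
      have h1 : b j < A.mulVec v j := lt_of_le_of_ne (hv j) (by rw [hAv]; exact Ne.symm hne')
      have h2 : 0 < ρt i j := (hpos j).2 hj
      have hlt : ∑ k, ρt i k * b k < ∑ k, ρt i k * A.mulVec v k :=
        Finset.sum_lt_sum (fun k _ => mul_le_mul_of_nonneg_left (hv k) (hρt_nn k))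
          ⟨j, Finset.mem_univ j, by nlinarith⟩
      simp only [dotProduct] at h
      linarith
    · intro h
      simp only [dotProduct]
      refine Finset.sum_congr rfl fun j _ => ?_
      rcases (hρt_nn j).lt_or_eq with hj | hj
      · rw [hAv] at *
        rw [h j ((hpos j).1 hj)]
      · rw [← hj, zero_mul, zero_mul]
  -- pick an optimal point for the hat objective
  obtain ⟨v₀, hv₀V, hv₀opt⟩ := vstar_nonempty A b hne hbd (ωhat.mulVec (x i))
  have hv₀S : ∀ j, 0 < ρhat i j → A j ⬝ᵥ v₀ = b j := by
    have : v₀ ∈ Vstar A b (ωhat.mulVec (x i)) := ⟨hv₀V, hv₀opt⟩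
    rw [hVstar] at this
    exact this.2
  have hv₀eq : ωt.mulVec (x i) ⬝ᵥ v₀ = ρt i ⬝ᵥ b := (heq v₀ hv₀V).2 hv₀S
  have hz : zstar A b (ωt.mulVec (x i)) = ρt i ⬝ᵥ b := by
    apply le_antisymm
    · exact le_of_le_of_eq (csInf_le ⟨ρt i ⬝ᵥ b, by rintro y ⟨w, hw, rfl⟩; exact hlb w hw⟩
        ⟨v₀, hv₀V, rfl⟩) hv₀eq
    · exact le_csInf (hne.image _) (by rintro y ⟨w, hw, rfl⟩; exact hlb w hw)
  ext v
  rw [hVstar]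
  constructor
  · rintro ⟨hvV, hvopt⟩
    exact ⟨hvV, (heq v hvV).1 (hvopt.trans hz)⟩
  · rintro ⟨hvV, hvt⟩
    exact ⟨hvV, ((heq v hvV).2 hvt).trans hz.symm⟩
end
end
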